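/- For j a nonnegative integer, let a_j denote the j-th derivative of the function λ ↦ √(λ/(2−λ)) evaluated at λ = 1 (this function is smooth on the interval (0,2)). Then a_0 = 1, and for every j ≥ 1: if j is even then a_j = (j−1)·a_{j−1}, while if j is odd then a_j = j·a_{j−1}. -/

import Mathlib

open Set Topology Filter
open scoped ContDiff

private lemma aj_iterWithin_open {s : Set ℝ} (hs : IsOpen s) {x : ℝ} (hx : x ∈ s)
    (f : ℝ → ℝ) (n : ℕ) : iteratedDerivWithin n f s x = iteratedDeriv n f x := by
  simp only [iteratedDerivWithin, iteratedDeriv, iteratedFDerivWithin_of_isOpen n hs hx]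

private lemma aj_iter_add {u : Set ℝ} (hu : IsOpen u) {f g : ℝ → ℝ} {x : ℝ} (hx : x ∈ u)
    (hf : ContDiffOn ℝ ∞ f u) (hg : ContDiffOn ℝ ∞ g u) (n : ℕ) :
    iteratedDeriv n (fun t => f t + g t) x = iteratedDeriv n f x + iteratedDeriv n g x := by
  rw [← aj_iterWithin_open hu hx, ← aj_iterWithin_open hu hx f, ← aj_iterWithin_open hu hx g]
  exact iteratedDerivWithin_add hx hu.uniqueDiffOn ((hf x hx).of_le (by exact_mod_cast le_top))
    ((hg x hx).of_le (by exact_mod_cast le_top))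

private lemma aj_iter_const_mul {u : Set ℝ} (hu : IsOpen u) {g : ℝ → ℝ} {x : ℝ} (hx : x ∈ u)
    (c : ℝ) (hg : ContDiffOn ℝ ∞ g u) (n : ℕ) :
    iteratedDeriv n (fun t => c * g t) x = c * iteratedDeriv n g x := by
  rw [← aj_iterWithin_open hu hx, ← aj_iterWithin_open hu hx g]
  exact iteratedDerivWithin_const_mul hx hu.uniqueDiffOn c ((hg x hx).of_le (by exact_mod_cast le_top))

/-- Leibniz: `((t-x) * g)⁽ⁿ⁾(x) = n * g⁽ⁿ⁻¹⁾(x)` for `g` smooth near `x`. -/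
private lemma aj_shift_mul {u : Set ℝ} (hu : IsOpen u) {x : ℝ} (hx : x ∈ u) {g : ℝ → ℝ}
    (hg : ContDiffOn ℝ ∞ g u) (n : ℕ) :
    iteratedDeriv n (fun t => (t - x) * g t) x = n * iteratedDeriv (n - 1) g x := by
  induction n generalizing g with
  | zero => simp
  | succ n ih =>
    have hg' : ContDiffOn ℝ ∞ (deriv g) u := hg.deriv_of_isOpen hu (by norm_num)
    have hlin : ContDiffOn ℝ ∞ (fun t : ℝ => t - x) u :=
      (contDiff_id.sub contDiff_const).contDiffOn
    have hev : deriv (fun t => (t - x) * g t) =ᶠ[𝓝 x]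
        fun t => g t + (t - x) * deriv g t := by
      filter_upwards [hu.mem_nhds hx] with t ht
      have hgd : DifferentiableAt ℝ g t :=
        (hg.differentiableOn (by simp) t ht).differentiableAt (hu.mem_nhds ht)
      have h1 : HasDerivAt (fun t : ℝ => t - x) 1 t := (hasDerivAt_id t).sub_const x
      have := (h1.mul hgd.hasDerivAt).deriv
      rw [show (fun t => (t - x) * g t) = (fun t => t - x) * g from rfl, this]; ring
    rw [iteratedDeriv_succ', hev.iteratedDeriv_eq n,
      aj_iter_add hu hx hg ((hlin.mul hg')) n, ih hg']
    rcases n with _ | m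
    · simp
    · rw [show m + 1 - 1 = m from rfl, show m + 1 + 1 - 1 = m + 1 from rfl,
        ← iteratedDeriv_succ']
      push_cast; ring

/-- Leibniz: `((t-x)² * g)⁽ⁿ⁾(x) = n(n-1) * g⁽ⁿ⁻²⁾(x)` for `g` smooth near `x`. -/
private lemma aj_shift_sq_mul {u : Set ℝ} (hu : IsOpen u) {x : ℝ} (hx : x ∈ u) {g : ℝ → ℝ}
    (hg : ContDiffOn ℝ ∞ g u) (n : ℕ) :
    iteratedDeriv n (fun t => (t - x) ^ 2 * g t) x
      = (n * (n - 1) : ℕ) * iteratedDeriv (n - 2) g x := by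
  induction n generalizing g with
  | zero => simp
  | succ n ih =>
    have hg' : ContDiffOn ℝ ∞ (deriv g) u := hg.deriv_of_isOpen hu (by norm_num)
    have hlin : ContDiffOn ℝ ∞ (fun t : ℝ => t - x) u :=
      (contDiff_id.sub contDiff_const).contDiffOn
    have hsq : ContDiffOn ℝ ∞ (fun t : ℝ => (t - x) ^ 2) u :=
      ((contDiff_id.sub contDiff_const).pow 2).contDiffOn
    have hev : deriv (fun t => (t - x) ^ 2 * g t) =ᶠ[𝓝 x]
        fun t => (t - x) * (2 * g t) + (t - x) ^ 2 * deriv g t := by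
      filter_upwards [hu.mem_nhds hx] with t ht
      have hgd : DifferentiableAt ℝ g t :=
        (hg.differentiableOn (by simp) t ht).differentiableAt (hu.mem_nhds ht)
      have h1 : HasDerivAt (fun t : ℝ => (t - x) ^ 2) (2 * (t - x)) t := by
        have := ((hasDerivAt_id t).sub_const x).pow 2
        simp at this; exact this
      have := (h1.mul hgd.hasDerivAt).deriv
      rw [show (fun t => (t - x) ^ 2 * g t) = (fun t => (t - x) ^ 2) * g from rfl, this]; ring
    have h2g : ContDiffOn ℝ ∞ (fun t => 2 * g t) u := ContDiffOn.mul contDiffOn_const hg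
    rw [iteratedDeriv_succ', hev.iteratedDeriv_eq n,
      aj_iter_add hu hx (hlin.mul h2g) (hsq.mul hg') n,
      aj_shift_mul hu hx h2g n, ih hg',
      aj_iter_const_mul hu hx 2 hg (n-1)]
    rcases n with _ | m
    · simp
    rcases m with _ | k
    · simp
    · rw [show (k + 1 + 1 : ℕ) - 2 = k from rfl, show (k + 1 + 1 : ℕ) - 1 = k + 1 from rfl,
        show (k + 1 + 1 + 1 : ℕ) - 2 = k + 1 from rfl,
        show (k + 1 + 1 + 1 : ℕ) - 1 = k + 1 + 1 from rfl,
        ← iteratedDeriv_succ']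
      push_cast; ring

theorem aj_recursion (a : ℕ → ℝ)
    (ha : ∀ j : ℕ, a j = iteratedDeriv j (fun l : ℝ => Real.sqrt (l / (2 - l))) 1) :
    a 0 = 1 ∧ ∀ j : ℕ, 1 ≤ j →
      (Even j → a j = ((j : ℝ) - 1) * a (j - 1)) ∧
      (Odd j → a j = (j : ℝ) * a (j - 1)) := by
  set f : ℝ → ℝ := fun l => Real.sqrt (l / (2 - l)) with hfdef
  set s : Set ℝ := Ioo (0 : ℝ) 2 with hsdef
  have hs : IsOpen s := isOpen_Ioo
  have h1 : (1 : ℝ) ∈ s := by constructor <;> norm_num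
  have hqpos : ∀ t ∈ s, 0 < t / (2 - t) := by
    rintro t ⟨ht0, ht2⟩
    exact div_pos ht0 (by linarith)
  have hf : ContDiffOn ℝ ∞ f s := by
    apply ContDiffOn.sqrt
    · exact ContDiffOn.div contDiffOn_id (contDiffOn_const.sub contDiffOn_id)
        (fun t ht => by rcases ht with ⟨_, ht2⟩; show (2:ℝ) - t ≠ 0; intro h; linarith)
    · exact fun t ht => (hqpos t ht).ne'
  have hf' : ContDiffOn ℝ ∞ (deriv f) s := hf.deriv_of_isOpen hs (by norm_num)
  -- the ODE : deriv f t = f t + (t-1)^2 * deriv f t on s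
  have hODE : ∀ t ∈ s, deriv f t = f t + (t - 1) ^ 2 * deriv f t := by
    rintro t ⟨ht0, ht2⟩
    have h2t : (2 : ℝ) - t ≠ 0 := by intro h; linarith
    have hq : HasDerivAt (fun l : ℝ => l / (2 - l)) (2 / (2 - t) ^ 2) t := by
      have := (hasDerivAt_id t).div ((hasDerivAt_id t).const_sub 2) h2t
      refine this.congr_deriv ?_
      simp only [id]; ring
    have hqp : 0 < t / (2 - t) := hqpos t ⟨ht0, ht2⟩
    have hfd : HasDerivAt f ((2 / (2 - t) ^ 2) / (2 * Real.sqrt (t / (2 - t)))) t :=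
      hq.sqrt hqp.ne'
    set y : ℝ := Real.sqrt (t / (2 - t)) with hy
    have hsqy : y * y = t / (2 - t) := Real.mul_self_sqrt hqp.le
    have hy0 : y ≠ 0 := by
      rw [hy]
      exact (Real.sqrt_pos.mpr hqp).ne'
    have hyy : y * y * (2 - t) = t := by
      rw [hsqy]; field_simp
    have hderiv : deriv f t = (2 / (2 - t) ^ 2) / (2 * y) := hfd.deriv
    rw [hderiv]
    show (2 / (2 - t) ^ 2) / (2 * y) = y + (t - 1) ^ 2 * ((2 / (2 - t) ^ 2) / (2 * y))
    have hA : ((2 / (2 - t) ^ 2) / (2 * y)) * (1 - (t - 1) ^ 2) = y := by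
      field_simp
      nlinarith [hyy]
    linear_combination hA
  set b : ℕ → ℝ := fun n => iteratedDeriv n f 1 with hbdef
  have hkey : ∀ n : ℕ, b (n + 1) = b n + (n * (n - 1) : ℕ) * b (n - 1) := by
    intro n
    have hev : deriv f =ᶠ[𝓝 (1:ℝ)] fun t => f t + (t - 1) ^ 2 * deriv f t := by
      filter_upwards [hs.mem_nhds h1] with t ht
      exact hODE t ht
    have hsq : ContDiffOn ℝ ∞ (fun t : ℝ => (t - 1) ^ 2 * deriv f t) s :=
      (((contDiff_id.sub contDiff_const).pow 2).contDiffOn).mul hf'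
    have hsplit : b (n + 1) = b n + (n * (n - 1) : ℕ) * iteratedDeriv (n - 2) (deriv f) 1 := by
      show iteratedDeriv (n+1) f 1 = _
      rw [iteratedDeriv_succ', hev.iteratedDeriv_eq n, aj_iter_add hs h1 hf hsq n,
        aj_shift_sq_mul hs h1 hf' n]
    rw [hsplit]
    rcases n with _ | m
    · simp
    rcases m with _ | k
    · simp
    · rw [show (k + 1 + 1 : ℕ) - 2 = k from rfl, show (k + 1 + 1 : ℕ) - 1 = k + 1 from rfl,
        ← iteratedDeriv_succ']
  have hb0 : b 0 = 1 := by
    show iteratedDeriv 0 f 1 = 1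
    rw [iteratedDeriv_zero]
    show Real.sqrt (1 / (2 - 1)) = 1
    norm_num
  have hab : ∀ j, a j = b j := fun j => ha j
  refine ⟨by rw [hab 0, hb0], ?_⟩
  have main : ∀ j : ℕ, 1 ≤ j →
      (Even j → b j = ((j : ℝ) - 1) * b (j - 1)) ∧
      (Odd j → b j = (j : ℝ) * b (j - 1)) := by
    intro j hj
    induction j, hj using Nat.le_induction with
    | base =>
      constructor
      · intro h; norm_num at h
      · intro _
        have h0 := hkey 0
        norm_num at h0 ⊢
        exact h0
    | succ n hn ihn =>
      have hk := hkey n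
      have hc : ((n * (n - 1) : ℕ) : ℝ) = (n : ℝ) * ((n : ℝ) - 1) := by
        rw [Nat.cast_mul, Nat.cast_sub hn]; norm_num
      rw [hc] at hk
      have hidx : (n + 1 : ℕ) - 1 = n := rfl
      constructor
      · intro heven
        have hodd : Odd n := Nat.not_even_iff_odd.mp (Nat.even_add_one.mp heven)
        have hIH : b n = (n : ℝ) * b (n - 1) := ihn.2 hodd
        rw [hidx, hk]
        push_cast
        linear_combination (1 - (n : ℝ)) * hIH
      · intro hoddn1
        have heven : Even n := by
          rcases Nat.even_or_odd n with h | h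
          · exact h
          · exact absurd (h.add_one) (Nat.not_even_iff_odd.mpr hoddn1)
        have hIH : b n = ((n : ℝ) - 1) * b (n - 1) := ihn.1 heven
        rw [hidx, hk]
        push_cast
        linear_combination (-(n : ℝ)) * hIH
  intro j hj
  obtain ⟨he, ho⟩ := main j hj
  exact ⟨fun h => by rw [hab j, hab (j-1)]; exact he h,
         fun h => by rw [hab j, hab (j-1)]; exact ho h⟩
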